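/- Let χ ∈ C³(Ω,ℝ), q_i^± = ∓∂_i + ∂_iχ, H^{(0)} = Σ_k q_k^+ q_k^-, and H^{(1)}_{ij} = δ_{ij} H^{(0)} + 2 ∂_i∂_j χ (multiplication operator). Then the intertwining relations H^{(0)} q_i^+ = Σ_{k=1}^2 q_k^+ H^{(1)}_{ki} and q_i^- H^{(0)} = Σ_{k=1}^2 H^{(1)}_{ik} q_k^- hold on C³-functions, for i = 1,2. -/

import Mathlib

noncomputable section

/-- Basis vectors of ℝ². -/
def e2 (i : Fin 2) : ℝ × ℝ := if i = 0 then (1, 0) else (0, 1)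

/-- Partial derivative ∂_i. -/
def pd (i : Fin 2) (f : ℝ × ℝ → ℝ) : ℝ × ℝ → ℝ := fun p => fderiv ℝ f p (e2 i)

/-- q_i^+ = -∂_i + (∂_i χ). -/
def qp (χ : ℝ × ℝ → ℝ) (i : Fin 2) (f : ℝ × ℝ → ℝ) : ℝ × ℝ → ℝ :=
  fun p => - pd i f p + pd i χ p * f p

/-- q_i^- = ∂_i + (∂_i χ). -/
def qm (χ : ℝ × ℝ → ℝ) (i : Fin 2) (f : ℝ × ℝ → ℝ) : ℝ × ℝ → ℝ :=
  fun p => pd i f p + pd i χ p * f p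

/-- Antisymmetric symbol ε with ε₀₁ = 1 = -ε₁₀. -/
def eps (i k : Fin 2) : ℝ := if i = 0 ∧ k = 1 then 1 else if i = 1 ∧ k = 0 then -1 else 0

/-- p_i^+ = Σ_k ε_{ik} q_k^-. -/
def pp (χ : ℝ × ℝ → ℝ) (i : Fin 2) (f : ℝ × ℝ → ℝ) : ℝ × ℝ → ℝ :=
  fun p => ∑ k : Fin 2, eps i k * qm χ k f p

/-- p_i^- = Σ_k ε_{ik} q_k^+. -/
def pm (χ : ℝ × ℝ → ℝ) (i : Fin 2) (f : ℝ × ℝ → ℝ) : ℝ × ℝ → ℝ :=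
  fun p => ∑ k : Fin 2, eps i k * qp χ k f p

/-- H^{(0)} = Σ_k q_k^+ q_k^-. -/
def H0 (χ f : ℝ × ℝ → ℝ) : ℝ × ℝ → ℝ := fun p => ∑ k : Fin 2, qp χ k (qm χ k f) p

/-- H^{(1)}_{ij} = δ_{ij} H^{(0)} + 2 ∂_i∂_j χ. -/
def H1 (χ : ℝ × ℝ → ℝ) (i j : Fin 2) (f : ℝ × ℝ → ℝ) : ℝ × ℝ → ℝ := fun p =>
  (if i = j then H0 χ f p else 0) + 2 * pd i (pd j χ) p * f p

section helpers
variable {Ω : Set (ℝ × ℝ)} {p : ℝ × ℝ}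

private lemma pd_congrOn (hΩ : IsOpen Ω) (hp : p ∈ Ω) {g h : ℝ × ℝ → ℝ}
    (hgh : ∀ x ∈ Ω, g x = h x) (i : Fin 2) : pd i g p = pd i h p := by
  unfold pd
  rw [Filter.EventuallyEq.fderiv_eq (Filter.eventually_of_mem (hΩ.mem_nhds hp) hgh)]

private lemma pd_add {g h : ℝ × ℝ → ℝ} (hg : DifferentiableAt ℝ g p)
    (hh : DifferentiableAt ℝ h p) (i : Fin 2) :
    pd i (fun x => g x + h x) p = pd i g p + pd i h p := by
  simp [pd, fderiv_fun_add hg hh]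

private lemma pd_neg {g : ℝ × ℝ → ℝ} (i : Fin 2) :
    pd i (fun x => -g x) p = -pd i g p := by
  simp [pd, fderiv_neg]

private lemma pd_sub {g h : ℝ × ℝ → ℝ} (hg : DifferentiableAt ℝ g p)
    (hh : DifferentiableAt ℝ h p) (i : Fin 2) :
    pd i (fun x => g x - h x) p = pd i g p - pd i h p := by
  simp [pd, fderiv_fun_sub hg hh]

private lemma pd_mul {g h : ℝ × ℝ → ℝ} (hg : DifferentiableAt ℝ g p)
    (hh : DifferentiableAt ℝ h p) (i : Fin 2) :
    pd i (fun x => g x * h x) p = pd i g p * h p + g p * pd i h p := by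
  simp [pd, fderiv_fun_mul hg hh]
  ring

private lemma pd_const_mul {g : ℝ × ℝ → ℝ} (hg : DifferentiableAt ℝ g p) (c : ℝ) (i : Fin 2) :
    pd i (fun x => c * g x) p = c * pd i g p := by
  simp [pd, fderiv_const_mul hg]

private lemma pd_contDiffOn {m n : WithTop ℕ∞} {g : ℝ × ℝ → ℝ} (hΩ : IsOpen Ω)
    (hg : ContDiffOn ℝ n g Ω) (hmn : m + 1 ≤ n) (i : Fin 2) :
    ContDiffOn ℝ m (pd i g) Ω :=
  (hg.fderiv_of_isOpen hΩ hmn).clm_apply contDiffOn_const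

private lemma diffAt_of_cdOn {n : WithTop ℕ∞} {g : ℝ × ℝ → ℝ} (hΩ : IsOpen Ω)
    (hg : ContDiffOn ℝ n g Ω) (hn : 1 ≤ n) (hp : p ∈ Ω) : DifferentiableAt ℝ g p :=
  (hg.differentiableOn (lt_of_lt_of_le zero_lt_one hn).ne').differentiableAt (hΩ.mem_nhds hp)

private lemma pd_comm {g : ℝ × ℝ → ℝ} (hΩ : IsOpen Ω) (hg : ContDiffOn ℝ 2 g Ω)
    (hp : p ∈ Ω) (a b : Fin 2) : pd a (pd b g) p = pd b (pd a g) p := by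
  have hat : ContDiffAt ℝ 2 g p := hg.contDiffAt (hΩ.mem_nhds hp)
  have hsym := hat.isSymmSndFDerivAt (by simp)
  have hdf : DifferentiableAt ℝ (fderiv ℝ g) p := by
    have h := hat.fderiv_right (m := 1) (by norm_num)
    exact h.differentiableAt (by norm_num)
  have key : ∀ u v : Fin 2, pd u (pd v g) p = fderiv ℝ (fderiv ℝ g) p (e2 u) (e2 v) := by
    intro u v
    show fderiv ℝ (fun x => (fderiv ℝ g x) (e2 v)) p (e2 u) = _
    rw [fderiv_clm_apply hdf (differentiableAt_const _)]
    simp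
  rw [key, key, hsym]

end helpers

/-- The intertwining relations H^{(0)} q_i^+ = Σ_k q_k^+ H^{(1)}_{ki}
and q_i^- H^{(0)} = Σ_k H^{(1)}_{ik} q_k^-. -/
theorem intertwining (Ω : Set (ℝ × ℝ)) (hΩ : IsOpen Ω)
    (χ : ℝ × ℝ → ℝ) (hχ : ContDiffOn ℝ 3 χ Ω)
    (f : ℝ × ℝ → ℝ) (hf : ContDiffOn ℝ 3 f Ω) (i : Fin 2) :
    ∀ p ∈ Ω,
      H0 χ (qp χ i f) p = (∑ k : Fin 2, qp χ k (H1 χ k i f) p) ∧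
      qm χ i (H0 χ f) p = (∑ k : Fin 2, H1 χ i k (qm χ k f) p) := by
  intro p hp
  -- basic smoothness
  have hχ2 : ContDiffOn ℝ 2 χ Ω := hχ.of_le (by norm_num)
  have hf2 : ContDiffOn ℝ 2 f Ω := hf.of_le (by norm_num)
  have hf1 : ContDiffOn ℝ 1 f Ω := hf.of_le (by norm_num)
  have Cχ1 : ∀ j : Fin 2, ContDiffOn ℝ 2 (pd j χ) Ω :=
    fun j => pd_contDiffOn hΩ hχ (by norm_num) j
  have Cf1 : ∀ j : Fin 2, ContDiffOn ℝ 2 (pd j f) Ω :=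
    fun j => pd_contDiffOn hΩ hf (by norm_num) j
  have Cχ2 : ∀ j k : Fin 2, ContDiffOn ℝ 1 (pd j (pd k χ)) Ω :=
    fun j k => pd_contDiffOn hΩ (Cχ1 k) (by norm_num) j
  have Cf2 : ∀ j k : Fin 2, ContDiffOn ℝ 1 (pd j (pd k f)) Ω :=
    fun j k => pd_contDiffOn hΩ (Cf1 k) (by norm_num) j
  -- differentiability
  have Dχ : ∀ x ∈ Ω, DifferentiableAt ℝ χ x :=
    fun x hx => diffAt_of_cdOn hΩ hχ (by norm_num) hx
  have Df : ∀ x ∈ Ω, DifferentiableAt ℝ f x :=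
    fun x hx => diffAt_of_cdOn hΩ hf (by norm_num) hx
  have Dχ1 : ∀ (j : Fin 2), ∀ x ∈ Ω, DifferentiableAt ℝ (pd j χ) x :=
    fun j x hx => diffAt_of_cdOn hΩ (Cχ1 j) (by norm_num) hx
  have Df1 : ∀ (j : Fin 2), ∀ x ∈ Ω, DifferentiableAt ℝ (pd j f) x :=
    fun j x hx => diffAt_of_cdOn hΩ (Cf1 j) (by norm_num) hx
  have Dχ2 : ∀ (j k : Fin 2), ∀ x ∈ Ω, DifferentiableAt ℝ (pd j (pd k χ)) x :=
    fun j k x hx => diffAt_of_cdOn hΩ (Cχ2 j k) (by norm_num) hx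
  have Df2 : ∀ (j k : Fin 2), ∀ x ∈ Ω, DifferentiableAt ℝ (pd j (pd k f)) x :=
    fun j k x hx => diffAt_of_cdOn hΩ (Cf2 j k) (by norm_num) hx
  -- smoothness of q^± f
  have Cqm : ∀ k : Fin 2, ContDiffOn ℝ 2 (qm χ k f) Ω :=
    fun k => (Cf1 k).add ((Cχ1 k).mul hf2)
  have Cqp : ∀ k : Fin 2, ContDiffOn ℝ 2 (qp χ k f) Ω :=
    fun k => (Cf1 k).neg.add ((Cχ1 k).mul hf2)
  have Dqp : ∀ x ∈ Ω, DifferentiableAt ℝ (qp χ i f) x :=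
    fun x hx => diffAt_of_cdOn hΩ (Cqp i) (by norm_num) hx
  have Dqp1 : ∀ (l : Fin 2), ∀ x ∈ Ω, DifferentiableAt ℝ (pd l (qp χ i f)) x :=
    fun l x hx => diffAt_of_cdOn hΩ (pd_contDiffOn (m := 1) hΩ (Cqp i) (by norm_num) l) (by norm_num) hx
  have Dqm : ∀ x ∈ Ω, DifferentiableAt ℝ (qm χ i f) x :=
    fun x hx => diffAt_of_cdOn hΩ (Cqm i) (by norm_num) hx
  have Dqm1 : ∀ (l : Fin 2), ∀ x ∈ Ω, DifferentiableAt ℝ (pd l (qm χ i f)) x :=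
    fun l x hx => diffAt_of_cdOn hΩ (pd_contDiffOn (m := 1) hΩ (Cqm i) (by norm_num) l) (by norm_num) hx
  -- the closed form of H0 applied to a function
  have HM : ∀ (g : ℝ × ℝ → ℝ), (∀ x ∈ Ω, DifferentiableAt ℝ g x) →
      (∀ (l : Fin 2), ∀ x ∈ Ω, DifferentiableAt ℝ (pd l g) x) →
      ∀ x ∈ Ω, H0 χ g x =
        (-(pd 0 (pd 0 g) x) + -(pd 1 (pd 1 g) x)) +
        ((pd 0 χ x * pd 0 χ x - pd 0 (pd 0 χ) x) + (pd 1 χ x * pd 1 χ x - pd 1 (pd 1 χ) x)) * g x := by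
    intro g hg hg1 x hx
    have key : ∀ k : Fin 2, qp χ k (qm χ k g) x =
        -(pd k (pd k g) x) + (pd k χ x * pd k χ x - pd k (pd k χ) x) * g x := by
      intro k
      have h1 : pd k (qm χ k g) x =
          pd k (pd k g) x + (pd k (pd k χ) x * g x + pd k χ x * pd k g x) := by
        rw [show qm χ k g = (fun y => pd k g y + pd k χ y * g y) from rfl,
          pd_add (hg1 k x hx) ((Dχ1 k x hx).fun_mul (hg x hx)) k,
          pd_mul (Dχ1 k x hx) (hg x hx) k]
      calc qp χ k (qm χ k g) x
          = -pd k (qm χ k g) x + pd k χ x * (pd k g x + pd k χ x * g x) := rfl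
        _ = _ := by rw [h1]; ring
    calc H0 χ g x = qp χ 0 (qm χ 0 g) x + qp χ 1 (qm χ 1 g) x := by
          simp [H0, Fin.sum_univ_two]
      _ = _ := by rw [key 0, key 1]; ring
  have HMf := HM f Df Df1
  have HMqp := HM (qp χ i f) Dqp Dqp1
  have HMqm := HM (qm χ i f) Dqm Dqm1
  -- H0 χ f is C¹ on Ω
  have CH0 : ContDiffOn ℝ 1 (H0 χ f) Ω := by
    have CF : ContDiffOn ℝ 1 (fun x =>
        (-(pd 0 (pd 0 f) x) + -(pd 1 (pd 1 f) x)) +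
        ((pd 0 χ x * pd 0 χ x - pd 0 (pd 0 χ) x) + (pd 1 χ x * pd 1 χ x - pd 1 (pd 1 χ) x)) * f x) Ω := by
      have c1 : ∀ j : Fin 2, ContDiffOn ℝ 1 (pd j χ) Ω := fun j => (Cχ1 j).of_le one_le_two
      exact ((Cf2 0 0).neg.add (Cf2 1 1).neg).add
        (((((c1 0).mul (c1 0)).sub (Cχ2 0 0)).add (((c1 1).mul (c1 1)).sub (Cχ2 1 1))).mul hf1)
    exact CF.congr fun x hx => HMf x hx
  -- first derivatives of q_i^± f, in canonical form, on Ω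
  have S1p : ∀ (l : Fin 2), ∀ x ∈ Ω, pd l (qp χ i f) x =
      -(pd l (pd i f) x) + (pd l (pd i χ) x * f x + pd i χ x * pd l f x) := by
    intro l x hx
    rw [show qp χ i f = (fun y => -(pd i f y) + pd i χ y * f y) from rfl,
      pd_add ((Df1 i x hx).fun_neg) ((Dχ1 i x hx).fun_mul (Df x hx)) l, pd_neg l,
      pd_mul (Dχ1 i x hx) (Df x hx) l]
  have S1m : ∀ (l : Fin 2), ∀ x ∈ Ω, pd l (qm χ i f) x =
      pd l (pd i f) x + (pd l (pd i χ) x * f x + pd i χ x * pd l f x) := by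
    intro l x hx
    rw [show qm χ i f = (fun y => pd i f y + pd i χ y * f y) from rfl,
      pd_add (Df1 i x hx) ((Dχ1 i x hx).fun_mul (Df x hx)) l,
      pd_mul (Dχ1 i x hx) (Df x hx) l]
  -- second derivatives of q_i^± f at p, in canonical form
  have T1 : ∀ k : Fin 2, pd k (pd k (qp χ i f)) p =
      -(pd i (pd k (pd k f)) p) + ((pd i (pd k (pd k χ)) p * f p + pd i (pd k χ) p * pd k f p)
        + (pd i (pd k χ) p * pd k f p + pd i χ p * pd k (pd k f) p)) := by
    intro k
    have hfun : ∀ x ∈ Ω, pd k (qp χ i f) x =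
        -(pd i (pd k f) x) + (pd i (pd k χ) x * f x + pd i χ x * pd k f x) := by
      intro x hx
      rw [S1p k x hx, pd_comm hΩ hf2 hx k i, pd_comm hΩ hχ2 hx k i]
    rw [pd_congrOn hΩ hp hfun k,
      pd_add ((Df2 i k p hp).fun_neg)
        (((Dχ2 i k p hp).fun_mul (Df p hp)).fun_add ((Dχ1 i p hp).fun_mul (Df1 k p hp))) k,
      pd_neg k,
      pd_add ((Dχ2 i k p hp).fun_mul (Df p hp)) ((Dχ1 i p hp).fun_mul (Df1 k p hp)) k,
      pd_mul (Dχ2 i k p hp) (Df p hp) k, pd_mul (Dχ1 i p hp) (Df1 k p hp) k,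
      pd_comm hΩ (Cf1 k) hp k i, pd_comm hΩ (Cχ1 k) hp k i, pd_comm hΩ hχ2 hp k i]
  have T3 : ∀ k : Fin 2, pd k (pd k (qm χ i f)) p =
      pd i (pd k (pd k f)) p + ((pd i (pd k (pd k χ)) p * f p + pd i (pd k χ) p * pd k f p)
        + (pd i (pd k χ) p * pd k f p + pd i χ p * pd k (pd k f) p)) := by
    intro k
    have hfun : ∀ x ∈ Ω, pd k (qm χ i f) x =
        pd i (pd k f) x + (pd i (pd k χ) x * f x + pd i χ x * pd k f x) := by
      intro x hx
      rw [S1m k x hx, pd_comm hΩ hf2 hx k i, pd_comm hΩ hχ2 hx k i]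
    rw [pd_congrOn hΩ hp hfun k,
      pd_add (Df2 i k p hp)
        (((Dχ2 i k p hp).fun_mul (Df p hp)).fun_add ((Dχ1 i p hp).fun_mul (Df1 k p hp))) k,
      pd_add ((Dχ2 i k p hp).fun_mul (Df p hp)) ((Dχ1 i p hp).fun_mul (Df1 k p hp)) k,
      pd_mul (Dχ2 i k p hp) (Df p hp) k, pd_mul (Dχ1 i p hp) (Df1 k p hp) k,
      pd_comm hΩ (Cf1 k) hp k i, pd_comm hΩ (Cχ1 k) hp k i, pd_comm hΩ hχ2 hp k i]
  -- derivative of H0 χ f at p in direction i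
  have DH0i : pd i (H0 χ f) p =
      (-(pd i (pd 0 (pd 0 f)) p) + -(pd i (pd 1 (pd 1 f)) p))
      + ((((pd i (pd 0 χ) p * pd 0 χ p + pd 0 χ p * pd i (pd 0 χ) p) - pd i (pd 0 (pd 0 χ)) p)
          + ((pd i (pd 1 χ) p * pd 1 χ p + pd 1 χ p * pd i (pd 1 χ) p) - pd i (pd 1 (pd 1 χ)) p)) * f p
        + ((pd 0 χ p * pd 0 χ p - pd 0 (pd 0 χ) p) + (pd 1 χ p * pd 1 χ p - pd 1 (pd 1 χ) p)) * pd i f p) := by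
    have dA0 : DifferentiableAt ℝ (fun x => -(pd 0 (pd 0 f) x)) p := (Df2 0 0 p hp).neg
    have dA1 : DifferentiableAt ℝ (fun x => -(pd 1 (pd 1 f) x)) p := (Df2 1 1 p hp).neg
    have db0 : DifferentiableAt ℝ (fun x => pd 0 χ x * pd 0 χ x - pd 0 (pd 0 χ) x) p :=
      ((Dχ1 0 p hp).mul (Dχ1 0 p hp)).sub (Dχ2 0 0 p hp)
    have db1 : DifferentiableAt ℝ (fun x => pd 1 χ x * pd 1 χ x - pd 1 (pd 1 χ) x) p :=
      ((Dχ1 1 p hp).mul (Dχ1 1 p hp)).sub (Dχ2 1 1 p hp)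
    rw [pd_congrOn hΩ hp (fun x hx => HMf x hx) i,
      pd_add (dA0.fun_add dA1) ((db0.fun_add db1).fun_mul (Df p hp)) i,
      pd_add dA0 dA1 i, pd_neg i, pd_neg i,
      pd_mul (db0.fun_add db1) (Df p hp) i,
      pd_add db0 db1 i,
      pd_sub ((Dχ1 0 p hp).fun_mul (Dχ1 0 p hp)) (Dχ2 0 0 p hp) i,
      pd_sub ((Dχ1 1 p hp).fun_mul (Dχ1 1 p hp)) (Dχ2 1 1 p hp) i,
      pd_mul (Dχ1 0 p hp) (Dχ1 0 p hp) i, pd_mul (Dχ1 1 p hp) (Dχ1 1 p hp) i]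
  -- splitting of q_k^+ H1_{k i}
  have split : ∀ k : Fin 2, qp χ k (H1 χ k i f) p =
      (if k = i then -(pd k (H0 χ f) p) + pd k χ p * H0 χ f p else 0)
      + (-(2 * (pd i (pd k (pd k χ)) p * f p + pd i (pd k χ) p * pd k f p))
         + pd k χ p * (2 * (pd i (pd k χ) p * f p))) := by
    intro k
    have hfun : ∀ x ∈ Ω, H1 χ k i f x =
        (if k = i then H0 χ f x else 0) + 2 * (pd i (pd k χ) x * f x) := by
      intro x hx
      simp only [H1]
      rw [pd_comm hΩ hχ2 hx k i]
      ring
    have hif : DifferentiableAt ℝ (fun x => if k = i then H0 χ f x else 0) p := by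
      by_cases hk : k = i
      · simpa [hk] using diffAt_of_cdOn hΩ CH0 le_rfl hp
      · simp only [if_neg hk]; exact differentiableAt_const 0
    have hpdif : pd k (fun x => if k = i then H0 χ f x else 0) p =
        (if k = i then pd k (H0 χ f) p else 0) := by
      by_cases hk : k = i <;> simp [hk, pd]
    have h1 : pd k (H1 χ k i f) p = (if k = i then pd k (H0 χ f) p else 0)
        + 2 * (pd i (pd k (pd k χ)) p * f p + pd i (pd k χ) p * pd k f p) := by
      rw [pd_congrOn hΩ hp hfun k,
        pd_add hif (((Dχ2 i k p hp).fun_mul (Df p hp)).const_mul 2) k,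
        hpdif,
        pd_const_mul ((Dχ2 i k p hp).fun_mul (Df p hp)) 2 k,
        pd_mul (Dχ2 i k p hp) (Df p hp) k,
        pd_comm hΩ (Cχ1 k) hp k i]
    have h2 : H1 χ k i f p = (if k = i then H0 χ f p else 0) + 2 * (pd i (pd k χ) p * f p) :=
      hfun p hp
    calc qp χ k (H1 χ k i f) p = -pd k (H1 χ k i f) p + pd k χ p * H1 χ k i f p := rfl
      _ = _ := by rw [h1, h2]; by_cases hk : k = i <;> simp [hk] <;> try ring
  have qpv : qp χ i f p = -pd i f p + pd i χ p * f p := rfl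
  have qmv : ∀ k : Fin 2, qm χ k f p = pd k f p + pd k χ p * f p := fun k => rfl
  constructor
  · -- first intertwining relation
    rw [HMqp p hp, T1 0, T1 1, qpv, Fin.sum_univ_two, split 0, split 1]
    rcases eq_or_ne i 0 with h0 | h0
    · subst h0
      rw [if_pos rfl, if_neg (by decide : ¬(1 : Fin 2) = 0), DH0i, HMf p hp]
      ring
    · have h1 : i = 1 := by
        have h2 := i.isLt
        have h3 : i.val ≠ 0 := fun h => h0 (Fin.ext h)
        exact Fin.ext (by omega)
      subst h1
      rw [if_neg (by decide : ¬(0 : Fin 2) = 1), if_pos rfl, DH0i, HMf p hp]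
      ring
  · -- second intertwining relation
    have splitR : ∀ k : Fin 2, H1 χ i k (qm χ k f) p =
        (if i = k then H0 χ (qm χ k f) p else 0) + 2 * pd i (pd k χ) p * qm χ k f p :=
      fun k => rfl
    have lhsv : qm χ i (H0 χ f) p = pd i (H0 χ f) p + pd i χ p * H0 χ f p := rfl
    rw [lhsv, DH0i, HMf p hp, Fin.sum_univ_two, splitR 0, splitR 1, qmv 0, qmv 1]
    rcases eq_or_ne i 0 with h0 | h0
    · subst h0
      rw [if_pos rfl, if_neg (by decide : ¬(0 : Fin 2) = 1), HMqm p hp, T3 0, T3 1, qmv 0]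
      ring
    · have h1 : i = 1 := by
        have h2 := i.isLt
        have h3 : i.val ≠ 0 := fun h => h0 (Fin.ext h)
        exact Fin.ext (by omega)
      subst h1
      rw [if_neg (by decide : ¬(1 : Fin 2) = 0), if_pos rfl, HMqm p hp, T3 0, T3 1, qmv 1]
      ring
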